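/- Recursion identity for Vandermonde quasideterminants, degree 2: with V_m := z^m - (x₁^m f₁(z) + x₂^m f₂(z)), where f₁(z) = (x₁-x₂)^{-1}(z-x₂), f₂(z) = (x₂-x₁)^{-1}(z-x₁), one has V_{m-1}·z = V_m - (x₂^{m-1}-x₁^{m-1})(x₂-x₁)^{-1}·V₂ for all m ≥ 2. -/
import Mathlib


/-- Recursion identity for degree-2 Vandermonde quasideterminants: with
`V m = z^m - (x₁^m f₁(z) + x₂^m f₂(z))`, `f₁(z) = (x₁-x₂)⁻¹(z-x₂)`,
`f₂(z) = (x₂-x₁)⁻¹(z-x₁)`, one has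
`V (m-1) · z = V m - (x₂^{m-1} - x₁^{m-1})(x₂-x₁)⁻¹ · V 2` for all `m ≥ 2`. -/
theorem vandermonde_recursion_deg2 (R : Type*) [Ring R] (x1 x2 z : R)
    [Invertible (x1 - x2)] [Invertible (x2 - x1)]
    (V : ℕ → R)
    (hV : ∀ m : ℕ, V m = z ^ m -
      (x1 ^ m * (⅟(x1 - x2) * (z - x2)) + x2 ^ m * (⅟(x2 - x1) * (z - x1)))) :
    ∀ m : ℕ, 2 ≤ m →
      V (m - 1) * z = V m - (x2 ^ (m - 1) - x1 ^ (m - 1)) * ⅟(x2 - x1) * V 2 := by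
  set u : R := ⅟(x2 - x1) with hu
  have hu1 : u * (x2 - x1) = 1 := invOf_mul_self _
  have hu2 : (x2 - x1) * u = 1 := mul_invOf_self _
  have cancel : ∀ w : R, u * ((x2 - x1) * w) = w := by
    intro w
    rw [← mul_assoc, hu1, one_mul]
  have e1 : ⅟(x1 - x2) = -u := by
    refine invOf_eq_right_inv ?_
    rw [mul_neg, ← neg_mul, neg_sub, hu2]
  set A : R := ⅟(x1 - x2) * (z - x2) with hA
  set B : R := u * (z - x1) with hB
  have hsum0 : A + B = 1 := by
    rw [hA, hB, e1]
    have : -u * (z - x2) + u * (z - x1) = u * (x2 - x1) := by noncomm_ring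
    rw [this, hu1]
  have hsum1 : x1 * A + x2 * B = z := by
    rw [hA, hB, e1, ← sub_eq_zero]
    have expand : x1 * (-u * (z - x2)) + x2 * (u * (z - x1)) - z =
        x1 * (u * (x2 - x1) - 1) + ((x2 - x1) * u - 1) * (z - x1) := by noncomm_ring
    rw [expand, hu1, hu2]
    simp
  have hab : (A * z - x1 * A) + (B * z - x2 * B) = 0 := by
    have : (A * z - x1 * A) + (B * z - x2 * B) = (A + B) * z - (x1 * A + x2 * B) := by
      noncomm_ring
    rw [this, hsum0, hsum1, one_mul, sub_self]
  have hab2 : x1 * (A * z - x1 * A) + x2 * (B * z - x2 * B) = V 2 := by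
    have : x1 * (A * z - x1 * A) + x2 * (B * z - x2 * B) =
        (x1 * A + x2 * B) * z - (x1 ^ 2 * A + x2 ^ 2 * B) := by noncomm_ring
    rw [this, hsum1, hV 2]
    noncomm_ring
  have hβ : B * z - x2 * B = -(A * z - x1 * A) :=
    add_eq_zero_iff_eq_neg.mp (by rwa [add_comm] at hab)
  have hα : A * z - x1 * A = -(u * V 2) := by
    have h3 : (x2 - x1) * (A * z - x1 * A) = -V 2 := by
      rw [← hab2, hβ]
      noncomm_ring
    calc A * z - x1 * A = u * ((x2 - x1) * (A * z - x1 * A)) := (cancel _).symm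
      _ = -(u * V 2) := by rw [h3, mul_neg]
  have hβ' : B * z - x2 * B = u * V 2 := by rw [hβ, hα, neg_neg]
  intro m hm
  obtain ⟨k, rfl⟩ := Nat.exists_eq_add_of_le hm
  have hm1 : 2 + k - 1 = k + 1 := by omega
  have hm2 : 2 + k = (k + 1) + 1 := by omega
  rw [hm1, hm2, hV (k + 1), hV (k + 1 + 1), ← sub_eq_zero]
  have expand : (z ^ (k + 1) - (x1 ^ (k + 1) * A + x2 ^ (k + 1) * B)) * z -
        ((z ^ (k + 1 + 1) - (x1 ^ (k + 1 + 1) * A + x2 ^ (k + 1 + 1) * B)) -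
          (x2 ^ (k + 1) - x1 ^ (k + 1)) * u * V 2) =
      -(x1 ^ (k + 1) * ((A * z - x1 * A) + u * V 2)) -
        x2 ^ (k + 1) * ((B * z - x2 * B) - u * V 2) +
        (z ^ (k + 1) * z - z ^ (k + 1 + 1)) := by
    noncomm_ring
  rw [expand, hα, hβ']
  simp [pow_succ]
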